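/- arXiv:1512.05507 — 2 statements merged into one kernel-verified Lean document; each statement's English description precedes it below -/
import Mathlib

section
/- Let f : ℝⁿ → ℝ and G : ℝⁿ → S^m be twice continuously differentiable. Let (x,Λ) ∈ ℝⁿ × S^m be a KKT pair of (P1) satisfying strict complementarity (rank G(x) + rank Λ = m), and assume that ⟨∇²ₓL(x,Λ)v, v⟩ + 2⟨W∘W, Λ⟩ > 0 for every nonzero (v,W) ∈ ℝⁿ × S^m with DG(x)v − 2√G(x)∘W = 0. Then x is a local minimum of (P1), i.e., a local minimum of f on the set {x' ∈ ℝⁿ : G(x') is PSD}. -/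
open Matrix

noncomputable section

def jmul {m : ℕ} (A B : Matrix (Fin m) (Fin m) ℝ) : Matrix (Fin m) (Fin m) ℝ :=
  (1 / 2 : ℝ) • (A * B + B * A)

def minner {m : ℕ} (A B : Matrix (Fin m) (Fin m) ℝ) : ℝ :=
  (A * B).trace

def memPhi {m : ℕ} (Λ Y : Matrix (Fin m) (Fin m) ℝ) : Prop :=
  ∀ W : Matrix (Fin m) (Fin m) ℝ, W.IsSymm → W ≠ 0 → jmul Y W = 0 →
    0 < minner (jmul W W) Λ

def pderivG {n m : ℕ} (G : (Fin n → ℝ) → Matrix (Fin m) (Fin m) ℝ)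
    (x : Fin n → ℝ) (k : Fin n) : Matrix (Fin m) (Fin m) ℝ :=
  Matrix.of fun i j => fderiv ℝ (fun y => G y i j) x (Pi.single k 1)

def dirDerivG {n m : ℕ} (G : (Fin n → ℝ) → Matrix (Fin m) (Fin m) ℝ)
    (x v : Fin n → ℝ) : Matrix (Fin m) (Fin m) ℝ :=
  ∑ k, v k • pderivG G x k

def adjDG {n m : ℕ} (G : (Fin n → ℝ) → Matrix (Fin m) (Fin m) ℝ)
    (x : Fin n → ℝ) (W : Matrix (Fin m) (Fin m) ℝ) : Fin n → ℝ :=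
  fun k => minner (pderivG G x k) W

def gradf {n : ℕ} (f : (Fin n → ℝ) → ℝ) (x : Fin n → ℝ) : Fin n → ℝ :=
  fun k => fderiv ℝ f x (Pi.single k 1)

def KKT1 {n m : ℕ} (f : (Fin n → ℝ) → ℝ) (G : (Fin n → ℝ) → Matrix (Fin m) (Fin m) ℝ)
    (x : Fin n → ℝ) (Λ : Matrix (Fin m) (Fin m) ℝ) : Prop :=
  gradf f x = adjDG G x Λ ∧ Λ.PosSemidef ∧ (G x).PosSemidef ∧ jmul Λ (G x) = 0

def KKT2 {n m : ℕ} (f : (Fin n → ℝ) → ℝ) (G : (Fin n → ℝ) → Matrix (Fin m) (Fin m) ℝ)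
    (x : Fin n → ℝ) (Y Λ : Matrix (Fin m) (Fin m) ℝ) : Prop :=
  gradf f x = adjDG G x Λ ∧ jmul Λ Y = 0 ∧ G x = jmul Y Y

def hessQ {n m : ℕ} (f : (Fin n → ℝ) → ℝ) (G : (Fin n → ℝ) → Matrix (Fin m) (Fin m) ℝ)
    (Λ : Matrix (Fin m) (Fin m) ℝ) (x v : Fin n → ℝ) : ℝ :=
  iteratedFDeriv ℝ 2 (fun y => f y - minner (G y) Λ) x ![v, v]

def SOSCNLP {n m : ℕ} (f : (Fin n → ℝ) → ℝ) (G : (Fin n → ℝ) → Matrix (Fin m) (Fin m) ℝ)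
    (x : Fin n → ℝ) (Y Λ : Matrix (Fin m) (Fin m) ℝ) : Prop :=
  ∀ (v : Fin n → ℝ) (W : Matrix (Fin m) (Fin m) ℝ), W.IsSymm →
    ¬(v = 0 ∧ W = 0) → dirDerivG G x v = (2 : ℝ) • jmul Y W →
    0 < hessQ f G Λ x v + 2 * minner (jmul W W) Λ

def SONCNLP {n m : ℕ} (f : (Fin n → ℝ) → ℝ) (G : (Fin n → ℝ) → Matrix (Fin m) (Fin m) ℝ)
    (x : Fin n → ℝ) (Y Λ : Matrix (Fin m) (Fin m) ℝ) : Prop :=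
  ∀ (v : Fin n → ℝ) (W : Matrix (Fin m) (Fin m) ℝ), W.IsSymm →
    dirDerivG G x v = (2 : ℝ) • jmul Y W →
    0 ≤ hessQ f G Λ x v + 2 * minner (jmul W W) Λ

def LICQ {n m : ℕ} (G : (Fin n → ℝ) → Matrix (Fin m) (Fin m) ℝ)
    (x : Fin n → ℝ) (Y : Matrix (Fin m) (Fin m) ℝ) : Prop :=
  ∀ W : Matrix (Fin m) (Fin m) ℝ, W.IsSymm → jmul Y W = 0 → adjDG G x W = 0 → W = 0

def Nondeg {n m : ℕ} (G : (Fin n → ℝ) → Matrix (Fin m) (Fin m) ℝ)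
    (x : Fin n → ℝ) : Prop :=
  ∀ W : Matrix (Fin m) (Fin m) ℝ, W.IsSymm → G x * W = 0 → adjDG G x W = 0 → W = 0

def CritCone {n m : ℕ} (f : (Fin n → ℝ) → ℝ) (G : (Fin n → ℝ) → Matrix (Fin m) (Fin m) ℝ)
    (x : Fin n → ℝ) : Set (Fin n → ℝ) :=
  {d | (∀ u : Fin m → ℝ, G x *ᵥ u = 0 → 0 ≤ u ⬝ᵥ (dirDerivG G x d *ᵥ u)) ∧
    gradf f x ⬝ᵥ d = 0}

def IsMPInv {m : ℕ} (A P : Matrix (Fin m) (Fin m) ℝ) : Prop :=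
  A * P * A = A ∧ P * A * P = P ∧ (A * P)ᵀ = A * P ∧ (P * A)ᵀ = P * A

def Hmat {n m : ℕ} (G : (Fin n → ℝ) → Matrix (Fin m) (Fin m) ℝ)
    (x : Fin n → ℝ) (Λ P : Matrix (Fin m) (Fin m) ℝ) : Matrix (Fin n) (Fin n) ℝ :=
  Matrix.of fun i j => 2 * (pderivG G x i * P * pderivG G x j * Λ).trace

/-- The PSD square root `Matrix.PosSemidef.sqrt` of the older Mathlib (since removed), with its old definition. -/
def psdSqrt {m : ℕ} {A : Matrix (Fin m) (Fin m) ℝ} (hA : A.PosSemidef) : Matrix (Fin m) (Fin m) ℝ :=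
  (hA.1.eigenvectorUnitary : Matrix (Fin m) (Fin m) ℝ) *
    diagonal ((↑) ∘ Real.sqrt ∘ hA.1.eigenvalues) *
    (star hA.1.eigenvectorUnitary : Matrix (Fin m) (Fin m) ℝ)

section psdSqrtLemmas
open scoped MatrixOrder

lemma psdSqrt_eq_cfc {m : ℕ} {A : Matrix (Fin m) (Fin m) ℝ} (hA : A.PosSemidef) :
    psdSqrt hA = CFC.sqrt A := by
  rw [CFC.sqrt_eq_cfc, cfc_nnreal_eq_real _ A, hA.1.cfc_eq]
  simp only [IsHermitian.cfc, Unitary.conjStarAlgAut_apply, psdSqrt]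
  congr 2
  ext i j
  simp only [diagonal_apply]
  split_ifs
  · simp only [Function.comp_apply]
    simp [Real.coe_sqrt, Real.coe_toNNReal', max_eq_left (hA.eigenvalues_nonneg i)]
  · rfl

lemma Matrix.PosSemidef.posSemidef_sqrt {m : ℕ} {A : Matrix (Fin m) (Fin m) ℝ}
    (hA : A.PosSemidef) : (psdSqrt hA).PosSemidef := by
  rw [psdSqrt_eq_cfc]; exact (CFC.sqrt_nonneg A).posSemidef

lemma Matrix.PosSemidef.sqrt_mul_self {m : ℕ} {A : Matrix (Fin m) (Fin m) ℝ}
    (hA : A.PosSemidef) : psdSqrt hA * psdSqrt hA = A := by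
  rw [psdSqrt_eq_cfc]; exact CFC.sqrt_mul_sqrt_self A hA.nonneg

lemma Matrix.PosSemidef.eq_sqrt_of_sq_eq {m : ℕ} {A B : Matrix (Fin m) (Fin m) ℝ}
    (hB : B.PosSemidef) (hA : A.PosSemidef) (h : B ^ 2 = A) : B = psdSqrt hA := by
  rw [psdSqrt_eq_cfc]; exact (CFC.sqrt_unique (by rw [← h, sq]) hB.nonneg).symm

end psdSqrtLemmas

/-! ### Auxiliary lemmas -/

open Filter Set Topology

section helpers
variable {E : Type*} [NormedAddCommGroup E] [NormedSpace ℝ E]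

lemma line_hasDerivAt' (x h : E) (t : ℝ) : HasDerivAt (fun s : ℝ => x + s • h) h t := by
  simpa using ((hasDerivAt_id t).smul_const h).const_add x

lemma mvt1' (g : E → ℝ) (hg : Differentiable ℝ g) (x h : E) :
    ∃ c ∈ Set.Ioo (0:ℝ) 1, g (x + h) - g x = fderiv ℝ g (x + c • h) h := by
  have hψ : ∀ t : ℝ, HasDerivAt (fun s : ℝ => g (x + s • h)) (fderiv ℝ g (x + t • h) h) t :=
    fun t => ((hg (x + t • h)).hasFDerivAt).comp_hasDerivAt t (line_hasDerivAt' x h t)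
  obtain ⟨c, hc, hceq⟩ := exists_hasDerivAt_eq_slope (fun s : ℝ => g (x + s • h))
    (fun t => fderiv ℝ g (x + t • h) h) one_pos
    ((continuous_iff_continuousAt.2 fun t => (hψ t).continuousAt).continuousOn)
    (fun t _ => hψ t)
  refine ⟨c, hc, ?_⟩
  rw [hceq]
  norm_num

lemma taylor2' (L : E → ℝ) (hL : ContDiff ℝ 2 L) (x h : E) :
    ∃ c ∈ Set.Ioo (0:ℝ) 1,
      L (x + h) = L x + fderiv ℝ L x h
        + fderiv ℝ (fderiv ℝ L) (x + c • h) h h / 2 := by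
  have hd1 : Differentiable ℝ L := hL.differentiable two_ne_zero
  have hC1 : ContDiff ℝ 1 (fderiv ℝ L) := hL.fderiv_right (by norm_num)
  have hd2 : Differentiable ℝ (fderiv ℝ L) := hC1.differentiable one_ne_zero
  set B : E → ℝ := fun y => fderiv ℝ (fderiv ℝ L) y h h with hBdef
  set M : ℝ := 2 * (L (x + h) - L x - fderiv ℝ L x h) with hM
  have hφ : ∀ t : ℝ, HasDerivAt (fun s : ℝ => L (x + s • h)) (fderiv ℝ L (x + t • h) h) t :=
    fun t => ((hd1 (x + t • h)).hasFDerivAt).comp_hasDerivAt t (line_hasDerivAt' x h t)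
  have hψ : ∀ t : ℝ, HasDerivAt (fun s : ℝ => fderiv ℝ L (x + s • h) h) (B (x + t • h)) t := by
    intro t
    have h1 : HasDerivAt (fun s : ℝ => fderiv ℝ L (x + s • h))
        (fderiv ℝ (fderiv ℝ L) (x + t • h) h) t :=
      ((hd2 (x + t • h)).hasFDerivAt).comp_hasDerivAt t (line_hasDerivAt' x h t)
    simpa using h1.clm_apply (hasDerivAt_const t h)
  set g : ℝ → ℝ := fun t => L (x + h) - L (x + t • h)
      - fderiv ℝ L (x + t • h) h * (1 - t) - M / 2 * (1 - t) ^ 2 with hg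
  have hg' : ∀ t : ℝ, HasDerivAt g ((1 - t) * (M - B (x + t • h))) t := by
    intro t
    have h2 : HasDerivAt (fun s : ℝ => (1 : ℝ) - s) (-1) t := by
      simpa using (hasDerivAt_id t).const_sub 1
    have h3 : HasDerivAt (fun s : ℝ => fderiv ℝ L (x + s • h) h * (1 - s))
        (B (x + t • h) * (1 - t) + fderiv ℝ L (x + t • h) h * (-1)) t := (hψ t).mul h2
    have h4 : HasDerivAt (fun s : ℝ => M / 2 * (1 - s) ^ 2)
        (M / 2 * ((2 : ℕ) * (1 - t) ^ 1 * (-1))) t := (h2.pow 2).const_mul (M / 2)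
    have h5 := (((hasDerivAt_const t (L (x + h))).sub (hφ t)).sub h3).sub h4
    have h6 : 0 - fderiv ℝ L (x + t • h) h
        - (B (x + t • h) * (1 - t) + fderiv ℝ L (x + t • h) h * (-1))
        - M / 2 * ((2 : ℕ) * (1 - t) ^ 1 * (-1)) = (1 - t) * (M - B (x + t • h)) := by
      push_cast; ring
    rw [h6] at h5
    exact h5
  obtain ⟨c, hc, hceq⟩ := exists_hasDerivAt_eq_slope g
    (fun t => (1 - t) * (M - B (x + t • h))) one_pos
    ((continuous_iff_continuousAt.2 fun t => (hg' t).continuousAt).continuousOn)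
    (fun t _ => hg' t)
  have hg1 : g 1 = 0 := by simp [hg]
  have hg0 : g 0 = 0 := by simp [hg, hM]
  rw [hg1, hg0] at hceq
  norm_num at hceq
  rcases hceq with hceq | hceq
  · exact absurd hceq (by linarith [hc.2])
  · refine ⟨c, hc, ?_⟩
    have hMB : M = B (x + c • h) := by linarith
    rw [hM] at hMB
    linarith

end helpers

section matrixhelpers
variable {mm : ℕ}

lemma tendsto_entry' {α : Type*} {l : Filter α} {A : α → Matrix (Fin mm) (Fin mm) ℝ}
    {A0 : Matrix (Fin mm) (Fin mm) ℝ} (h : Tendsto A l (𝓝 A0)) (i j : Fin mm) :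
    Tendsto (fun k => A k i j) l (𝓝 (A0 i j)) :=
  tendsto_pi_nhds.1 (tendsto_pi_nhds.1 h i) j

lemma tendsto_matrix_of_entries' {α : Type*} {l : Filter α} {A : α → Matrix (Fin mm) (Fin mm) ℝ}
    {A0 : Matrix (Fin mm) (Fin mm) ℝ}
    (h : ∀ i j, Tendsto (fun k => A k i j) l (𝓝 (A0 i j))) : Tendsto A l (𝓝 A0) :=
  tendsto_pi_nhds.2 fun i => tendsto_pi_nhds.2 fun j => h i j

lemma sqrt_tendsto' {A : ℕ → Matrix (Fin mm) (Fin mm) ℝ} {A0 : Matrix (Fin mm) (Fin mm) ℝ}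
    (hA : ∀ k, (A k).PosSemidef) (hA0 : A0.PosSemidef)
    (hconv : Tendsto A atTop (𝓝 A0)) :
    Tendsto (fun k => psdSqrt (hA k)) atTop (𝓝 (psdSqrt hA0)) := by
  set S : ℕ → Matrix (Fin mm) (Fin mm) ℝ := fun k => psdSqrt (hA k) with hS
  have hSpsd : ∀ k, (S k).PosSemidef := fun k => (hA k).posSemidef_sqrt
  have hSsym : ∀ k i j, S k j i = S k i j := by
    intro k i j
    have h1 : (S k)ᵀ = S k := by
      rw [← Matrix.conjTranspose_eq_transpose_of_trivial]; exact (hSpsd k).1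
    calc S k j i = (S k)ᵀ i j := rfl
    _ = S k i j := by rw [h1]
  have hmul : ∀ k, S k * S k = A k := fun k => (hA k).sqrt_mul_self
  have htr : Tendsto (fun k => (A k).trace) atTop (𝓝 A0.trace) := by
    have h1 : ∀ k, (A k).trace = ∑ i, A k i i := fun k => rfl
    have h2 : A0.trace = ∑ i, A0 i i := rfl
    simp only [h1]
    rw [h2]
    exact tendsto_finset_sum _ fun i _ => tendsto_entry' hconv i i
  obtain ⟨C, hC⟩ : ∃ C : ℝ, ∀ k, (A k).trace ≤ C := by
    obtain ⟨C, hC⟩ := htr.bddAbove_range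
    exact ⟨C, fun k => hC (Set.mem_range_self k)⟩
  have hsqsum : ∀ k, ∑ i, ∑ j, (S k i j) ^ 2 = (A k).trace := by
    intro k
    rw [← hmul k]
    have h1 : (S k * S k).trace = ∑ i, ∑ j, S k i j * S k j i := by
      simp [Matrix.trace, Matrix.diag, Matrix.mul_apply]
    rw [h1]
    congr 1; funext i; congr 1; funext j
    rw [hSsym k i j]; ring
  have hSb : ∀ k i j, |S k i j| ≤ Real.sqrt C := by
    intro k i j
    have h1 : (S k i j) ^ 2 ≤ ∑ i', ∑ j', (S k i' j') ^ 2 := by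
      calc (S k i j) ^ 2 ≤ ∑ j', (S k i j') ^ 2 :=
            Finset.single_le_sum (f := fun j' => (S k i j') ^ 2)
              (fun j' _ => sq_nonneg _) (Finset.mem_univ j)
      _ ≤ ∑ i', ∑ j', (S k i' j') ^ 2 :=
            Finset.single_le_sum (f := fun i' => ∑ j', (S k i' j') ^ 2)
              (fun i' _ => Finset.sum_nonneg fun j' _ => sq_nonneg _) (Finset.mem_univ i)
    rw [← Real.sqrt_sq_eq_abs]
    exact Real.sqrt_le_sqrt (by rw [hsqsum k] at h1; exact h1.trans (hC k))
  set c : ℝ := Real.sqrt C with hc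
  have hKc : IsCompact (Set.univ.pi fun _ : Fin mm =>
      (Set.univ.pi fun _ : Fin mm => Set.Icc (-c) c) :
      Set (Matrix (Fin mm) (Fin mm) ℝ)) :=
    isCompact_univ_pi fun _ => isCompact_univ_pi fun _ => isCompact_Icc
  have hmem : ∀ k, S k ∈ (Set.univ.pi fun _ : Fin mm =>
      (Set.univ.pi fun _ : Fin mm => Set.Icc (-c) c) :
      Set (Matrix (Fin mm) (Fin mm) ℝ)) := by
    intro k
    exact Set.mem_univ_pi.2 fun i => Set.mem_univ_pi.2 fun j =>
      Set.mem_Icc.2 (abs_le.1 (hSb k i j))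
  apply Filter.tendsto_of_subseq_tendsto
  intro ns hns
  obtain ⟨S0, hS0K, ms, hmsmono, hms0⟩ := hKc.tendsto_subseq (fun i => hmem (ns i))
  refine ⟨ms, ?_⟩
  set T0 : Matrix (Fin mm) (Fin mm) ℝ := Matrix.of S0 with hT0
  have hms : Tendsto (fun i => S (ns (ms i))) atTop (𝓝 T0) := hms0
  have hsub : Tendsto (fun i => A (ns (ms i))) atTop (𝓝 A0) :=
    hconv.comp (hns.comp hmsmono.tendsto_atTop)
  have hS0sym : T0.IsHermitian := by
    apply Matrix.ext
    intro i j
    rw [Matrix.conjTranspose_apply, star_trivial]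
    have e1 : Tendsto (fun i' => S (ns (ms i')) i j) atTop (𝓝 (T0 i j)) := tendsto_entry' hms i j
    have e2 : Tendsto (fun i' => S (ns (ms i')) j i) atTop (𝓝 (T0 j i)) := tendsto_entry' hms j i
    have e3 : Tendsto (fun i' => S (ns (ms i')) j i) atTop (𝓝 (T0 i j)) := by
      simp only [hSsym]; exact e1
    exact tendsto_nhds_unique e2 e3
  have hS0psd : T0.PosSemidef := by
    refine Matrix.PosSemidef.of_dotProduct_mulVec_nonneg hS0sym fun v => ?_
    have e1 : Tendsto (fun i' => star v ⬝ᵥ S (ns (ms i')) *ᵥ v) atTop (𝓝 (star v ⬝ᵥ T0 *ᵥ v)) := by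
      simp only [dotProduct, Matrix.mulVec]
      exact tendsto_finset_sum _ fun i _ => tendsto_const_nhds.mul
        (tendsto_finset_sum _ fun j _ => (tendsto_entry' hms i j).mul tendsto_const_nhds)
    exact le_of_tendsto_of_tendsto' tendsto_const_nhds e1 fun i' => (hSpsd _).dotProduct_mulVec_nonneg v
  have hsq : T0 * T0 = A0 := by
    have e1 : Tendsto (fun i => S (ns (ms i)) * S (ns (ms i))) atTop (𝓝 (T0 * T0)) := by
      apply tendsto_matrix_of_entries'
      intro i j
      simp only [Matrix.mul_apply]
      exact tendsto_finset_sum _ fun l _ =>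
        (tendsto_entry' hms i l).mul (tendsto_entry' hms l j)
    have e2 : Tendsto (fun i => S (ns (ms i)) * S (ns (ms i))) atTop (𝓝 A0) := by
      simp only [hmul]; exact hsub
    exact tendsto_nhds_unique e1 e2
  have hfin : T0 = psdSqrt hA0 := hS0psd.eq_sqrt_of_sq_eq hA0 (by rw [pow_two]; exact hsq)
  rw [← hfin]
  exact hms

end matrixhelpers

lemma seg_tendsto' {n : ℕ} {c : ℕ → ℝ} (hc : ∀ k, c k ∈ Set.Ioo (0:ℝ) 1)
    {h : ℕ → Fin n → ℝ} (hh : Tendsto h atTop (𝓝 0)) (x : Fin n → ℝ) :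
    Tendsto (fun k => x + c k • h k) atTop (𝓝 x) := by
  rw [tendsto_pi_nhds]
  intro i
  have h1 : Tendsto (fun k => c k * h k i) atTop (𝓝 0) := by
    have hbd : ∀ k, ‖c k * h k i‖ ≤ |h k i| := by
      intro k
      rw [Real.norm_eq_abs, abs_mul]
      have h01 := (hc k).1
      have h02 := (hc k).2
      have hc1 : |c k| ≤ 1 := by rw [abs_of_pos h01]; linarith
      nlinarith [abs_nonneg (h k i)]
    have habs : Tendsto (fun k => |h k i|) atTop (𝓝 0) := by
      have := tendsto_pi_nhds.1 hh i
      simpa using this.abs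
    exact squeeze_zero_norm hbd habs
  have h2 : Tendsto (fun k => x i + c k * h k i) atTop (𝓝 (x i + 0)) :=
    tendsto_const_nhds.add h1
  rw [add_zero] at h2
  simpa [Pi.add_apply, Pi.smul_apply, smul_eq_mul] using h2

set_option maxHeartbeats 2000000 in
theorem stmt16 {n m : ℕ} (f : (Fin n → ℝ) → ℝ) (G : (Fin n → ℝ) → Matrix (Fin m) (Fin m) ℝ)
    (hf : ContDiff ℝ 2 f) (hG : ∀ i j, ContDiff ℝ 2 fun y => G y i j)
    (x : Fin n → ℝ) (Λ : Matrix (Fin m) (Fin m) ℝ)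
    (hKKT : KKT1 f G x Λ) (hGx : (G x).PosSemidef)
    (hsc : (G x).rank + Λ.rank = m)
    (hsosc : SOSCNLP f G x (psdSqrt hGx) Λ) :
    IsLocalMinOn f {y | (G y).PosSemidef} x := by
  classical
  obtain ⟨hgrad, hΛpsd, hGpsd, hcomp⟩ := hKKT
  set Y : Matrix (Fin m) (Fin m) ℝ := psdSqrt hGx with hYdef
  have hYpsd : Y.PosSemidef := hGx.posSemidef_sqrt
  have hYsym : Yᵀ = Y := by
    rw [← Matrix.conjTranspose_eq_transpose_of_trivial]; exact hYpsd.1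
  have hΛsym : Λᵀ = Λ := by
    rw [← Matrix.conjTranspose_eq_transpose_of_trivial]; exact hΛpsd.1
  have hYY : Y * Y = G x := hGx.sqrt_mul_self
  -- trace of G x * Λ is zero
  have htr0 : (G x * Λ).trace = 0 := by
    have h1 : ((1 / 2 : ℝ) • (Λ * G x + G x * Λ)).trace = 0 := by
      rw [show (1 / 2 : ℝ) • (Λ * G x + G x * Λ) = jmul Λ (G x) from rfl, hcomp]
      simp
    rw [Matrix.trace_smul, Matrix.trace_add, Matrix.trace_mul_comm Λ (G x)] at h1
    have : (2 : ℝ) * (G x * Λ).trace = 0 := by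
      rw [smul_eq_mul] at h1; linarith [h1]
    linarith
  -- Λ Y = 0 and Y Λ = 0
  have hΛY : Λ * Y = 0 := by
    set R : Matrix (Fin m) (Fin m) ℝ := psdSqrt hΛpsd with hR
    have hRR : R * R = Λ := hΛpsd.sqrt_mul_self
    have hRsym : Rᵀ = R := by
      rw [← Matrix.conjTranspose_eq_transpose_of_trivial]; exact hΛpsd.posSemidef_sqrt.1
    have hB : ((R * Y)ᵀ * (R * Y)).trace = 0 := by
      rw [Matrix.transpose_mul, hRsym, hYsym]
      have e1 : Y * R * (R * Y) = Y * Λ * Y := by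
        rw [← hRR]; noncomm_ring
      rw [e1]
      rw [Matrix.trace_mul_comm (Y * Λ) Y, ← Matrix.mul_assoc, Matrix.trace_mul_comm (Y * Y) Λ,
        hYY, Matrix.trace_mul_comm Λ (G x)]
      exact htr0
    have hRY : R * Y = 0 := by
      set P : Matrix (Fin m) (Fin m) ℝ := R * Y with hP
      have h2 : (Pᵀ * P).trace = ∑ j, ∑ i, (P i j) ^ 2 := by
        simp [Matrix.trace, Matrix.diag, Matrix.mul_apply, Matrix.transpose_apply, sq]
      rw [h2] at hB
      ext i j
      have h3 : ∀ j' ∈ Finset.univ, (0:ℝ) ≤ ∑ i', (P i' j') ^ 2 :=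
        fun j' _ => Finset.sum_nonneg fun i' _ => sq_nonneg _
      have h4 := (Finset.sum_eq_zero_iff_of_nonneg h3).1 hB j (Finset.mem_univ j)
      have h5 := (Finset.sum_eq_zero_iff_of_nonneg
        (fun i' _ => sq_nonneg (P i' j))).1 h4 i (Finset.mem_univ i)
      simpa using pow_eq_zero_iff (n := 2) (by norm_num) |>.1 h5
    calc Λ * Y = R * R * Y := by rw [hRR]
    _ = R * (R * Y) := by rw [Matrix.mul_assoc]
    _ = 0 := by rw [hRY, Matrix.mul_zero]
  have hYΛ : Y * Λ = 0 := by
    have := congrArg Matrix.transpose hΛY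
    rwa [Matrix.transpose_mul, hYsym, hΛsym, Matrix.transpose_zero] at this
  -- the Lagrangian
  set L : (Fin n → ℝ) → ℝ := fun y => f y - minner (G y) Λ with hLdef
  have hminner_rw : (fun y : Fin n → ℝ => minner (G y) Λ)
      = fun y => ∑ i, ∑ j, G y i j * Λ j i := by
    funext y
    simp [minner, Matrix.trace, Matrix.diag, Matrix.mul_apply]
  have hLC2 : ContDiff ℝ 2 L := by
    apply hf.sub
    rw [hminner_rw]
    exact ContDiff.sum fun i _ => ContDiff.sum fun j _ => (hG i j).mul contDiff_const
  -- first derivative of L vanishes at x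
  have hgrad0 : ∀ v, fderiv ℝ L x v = 0 := by
    have hTd : HasFDerivAt (fun y : Fin n → ℝ => minner (G y) Λ)
        (∑ i, ∑ j, Λ j i • fderiv ℝ (fun y => G y i j) x) x := by
      rw [hminner_rw]
      exact HasFDerivAt.fun_sum fun i _ => HasFDerivAt.fun_sum fun j _ =>
        (((hG i j).differentiable two_ne_zero x).hasFDerivAt).mul_const (Λ j i)
    have hLd : HasFDerivAt L
        (fderiv ℝ f x - ∑ i, ∑ j, Λ j i • fderiv ℝ (fun y => G y i j) x) x :=
      ((hf.differentiable two_ne_zero x).hasFDerivAt).sub hTd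
    have hfderivL := hLd.fderiv
    have hsingle : ∀ kk, fderiv ℝ L x (Pi.single kk 1) = 0 := by
      intro kk
      have e := congrFun hgrad kk
      have e' : fderiv ℝ f x (Pi.single kk 1)
          = ∑ i, ∑ j, fderiv ℝ (fun y => G y i j) x (Pi.single kk 1) * Λ j i := by
        simpa [gradf, adjDG, minner, pderivG, Matrix.trace, Matrix.diag, Matrix.mul_apply,
          Matrix.of_apply] using e
      rw [hfderivL]
      simp only [ContinuousLinearMap.coe_sub', Pi.sub_apply, ContinuousLinearMap.coe_sum',
        Finset.sum_apply, ContinuousLinearMap.coe_smul', Pi.smul_apply, smul_eq_mul]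
      rw [e']
      rw [sub_eq_zero]
      exact Finset.sum_congr rfl fun i _ => Finset.sum_congr rfl fun j _ => by ring
    intro v
    have hv : v = ∑ kk, v kk • (Pi.single kk (1:ℝ) : Fin n → ℝ) := by
      funext j
      simp [Pi.single_apply, Finset.sum_apply]
    calc fderiv ℝ L x v
        = fderiv ℝ L x (∑ kk, v kk • (Pi.single kk (1:ℝ) : Fin n → ℝ)) := by rw [← hv]
    _ = ∑ kk, v kk • fderiv ℝ L x (Pi.single kk (1:ℝ) : Fin n → ℝ) := by
        rw [map_sum]; exact Finset.sum_congr rfl fun kk _ => (fderiv ℝ L x).map_smul _ _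
    _ = 0 := by simp [hsingle]
  -- Negation: extract a minimizing sequence
  by_contra hnot
  have hfr : ∃ᶠ y' in 𝓝[{y | (G y).PosSemidef}] x, f y' < f x := by
    have h1 : ¬ ∀ᶠ y' in 𝓝[{y | (G y).PosSemidef}] x, f x ≤ f y' := hnot
    simpa [Filter.not_eventually, not_le] using h1
  have hseq : ∀ k : ℕ, ∃ y', (y' ∈ Metric.ball x ((1:ℝ)/((k:ℝ)+1)) ∧ (G y').PosSemidef)
      ∧ f y' < f x := by
    intro k
    have hball : Metric.ball x ((1:ℝ)/((k:ℝ)+1)) ∩ {y | (G y).PosSemidef}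
        ∈ 𝓝[{y | (G y).PosSemidef}] x :=
      Filter.inter_mem (mem_nhdsWithin_of_mem_nhds (Metric.ball_mem_nhds x (by positivity)))
        self_mem_nhdsWithin
    obtain ⟨y', hy1, hy2⟩ :=
      (hfr.and_eventually (Filter.eventually_of_mem hball (fun _ hh => hh))).exists
    exact ⟨y', ⟨hy2.1, hy2.2⟩, hy1⟩
  choose y hymem hyf using hseq
  have hyball : ∀ k : ℕ, dist (y k) x < (1:ℝ)/((k:ℝ)+1) := fun k => Metric.mem_ball.1 (hymem k).1
  have hyS : ∀ k, (G (y k)).PosSemidef := fun k => (hymem k).2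
  have hyx : Tendsto y atTop (𝓝 x) := by
    apply tendsto_iff_dist_tendsto_zero.2
    apply squeeze_zero (fun k => dist_nonneg) (fun k => (hyball k).le)
    exact tendsto_one_div_add_atTop_nhds_zero_nat
  -- square roots
  have hGyx : Tendsto (fun k => G (y k)) atTop (𝓝 (G x)) := by
    apply tendsto_matrix_of_entries'
    intro i j
    exact (((hG i j).continuous).tendsto x).comp hyx
  set Yk : ℕ → Matrix (Fin m) (Fin m) ℝ := fun k => psdSqrt (hyS k) with hYkdef
  have hYkt : Tendsto Yk atTop (𝓝 Y) := sqrt_tendsto' hyS hGx hGyx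
  set Δ : ℕ → Matrix (Fin m) (Fin m) ℝ := fun k => Yk k - Y with hΔdef
  have hΔ0 : Tendsto Δ atTop (𝓝 0) := by
    have := hYkt.sub (tendsto_const_nhds (x := Y))
    simpa using this
  have hYkeq : ∀ k, Yk k = Y + Δ k := fun k => by simp [hΔdef]
  have hYksym : ∀ k, (Yk k)ᵀ = Yk k := fun k => by
    rw [← Matrix.conjTranspose_eq_transpose_of_trivial]; exact (hyS k).posSemidef_sqrt.1
  have hΔsym : ∀ k, (Δ k)ᵀ = Δ k := fun k => by
    simp [hΔdef, Matrix.transpose_sub, hYksym k, hYsym]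
  set h : ℕ → Fin n → ℝ := fun k => y k - x with hhdef
  have hh0 : Tendsto h atTop (𝓝 0) := by
    have := hyx.sub (tendsto_const_nhds (x := x))
    simpa using this
  set t : ℕ → ℝ := fun k => Real.sqrt (∑ i, (h k i)^2 + ∑ i, ∑ j, (Δ k i j)^2) with htdef
  have hQnn : ∀ k, 0 ≤ ∑ i, (h k i)^2 + ∑ i, ∑ j, (Δ k i j)^2 := fun k =>
    add_nonneg (Finset.sum_nonneg fun _ _ => sq_nonneg _)
      (Finset.sum_nonneg fun _ _ => Finset.sum_nonneg fun _ _ => sq_nonneg _)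
  have ht2 : ∀ k, (t k)^2 = ∑ i, (h k i)^2 + ∑ i, ∑ j, (Δ k i j)^2 := fun k =>
    Real.sq_sqrt (hQnn k)
  have hyne : ∀ k, y k ≠ x := by
    intro k he
    have h1 := hyf k
    rw [he] at h1
    exact lt_irrefl _ h1
  have htpos : ∀ k, 0 < t k := by
    intro k
    apply Real.sqrt_pos.2
    have h1 : h k ≠ 0 := sub_ne_zero.2 (hyne k)
    obtain ⟨i, hi⟩ := Function.ne_iff.1 h1
    have hi' : h k i ≠ 0 := by simpa using hi
    have h2 : 0 < (h k i)^2 := lt_of_le_of_ne (sq_nonneg _) (Ne.symm (pow_ne_zero 2 hi'))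
    have h3 : 0 < ∑ i', (h k i')^2 :=
      Finset.sum_pos' (fun _ _ => sq_nonneg _) ⟨i, Finset.mem_univ i, h2⟩
    have h4 : 0 ≤ ∑ i', ∑ j', (Δ k i' j')^2 :=
      Finset.sum_nonneg fun _ _ => Finset.sum_nonneg fun _ _ => sq_nonneg _
    linarith
  have ht0 : Tendsto t atTop (𝓝 0) := by
    have h1 : Tendsto (fun k => ∑ i, (h k i)^2 + ∑ i, ∑ j, (Δ k i j)^2) atTop (𝓝 0) := by
      have e1 : Tendsto (fun k => ∑ i, (h k i)^2) atTop (𝓝 0) := by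
        have e0 : ∀ i : Fin n, Tendsto (fun k => (h k i)^2) atTop (𝓝 0) := fun i => by
          simpa using ((tendsto_pi_nhds.1 hh0 i).pow 2)
        simpa using tendsto_finset_sum Finset.univ (fun i _ => e0 i)
      have e2 : Tendsto (fun k => ∑ i, ∑ j, (Δ k i j)^2) atTop (𝓝 0) := by
        have e0 : ∀ (i j : Fin m), Tendsto (fun k => (Δ k i j)^2) atTop (𝓝 0) := fun i j => by
          simpa using ((tendsto_entry' hΔ0 i j).pow 2)
        have := tendsto_finset_sum (Finset.univ (α := Fin m)) (fun i (_ : i ∈ Finset.univ) =>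
          tendsto_finset_sum (Finset.univ (α := Fin m)) (fun j _ => e0 i j))
        simpa using this
      simpa using e1.add e2
    have h2 := (Real.continuous_sqrt.tendsto 0).comp h1
    rw [Real.sqrt_zero] at h2
    exact h2
  set d : ℕ → Fin n → ℝ := fun k => (t k)⁻¹ • h k with hddef
  set W : ℕ → Matrix (Fin m) (Fin m) ℝ := fun k => (t k)⁻¹ • Δ k with hWdef
  have hhd : ∀ k, h k = t k • d k := fun k => by
    simp [hddef, smul_smul, mul_inv_cancel₀ (htpos k).ne']
  have hΔW : ∀ k, Δ k = t k • W k := fun k => by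
    simp [hWdef, smul_smul, mul_inv_cancel₀ (htpos k).ne']
  -- Taylor expansion of L along the sequence
  have htay : ∀ k, ∃ c ∈ Set.Ioo (0:ℝ) 1,
      L (x + h k) = L x + fderiv ℝ L x (h k)
        + fderiv ℝ (fderiv ℝ L) (x + c • h k) (h k) (h k) / 2 :=
    fun k => taylor2' L hLC2 x (h k)
  choose cc hccIoo hcceq using htay
  set z : ℕ → Fin n → ℝ := fun k => x + cc k • h k with hzdef
  have hxh : ∀ k, x + h k = y k := fun k => by simp [hhdef]
  -- the complementarity trace identity
  have htrk : ∀ k, (G (y k) * Λ).trace = ((Δ k * Δ k) * Λ).trace := by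
    intro k
    have e0 : G (y k) = Yk k * Yk k := ((hyS k).sqrt_mul_self).symm
    have e1 : G (y k) = Y * Y * Λ * 0 + (Y * Y + (Y * Δ k + Δ k * Y + Δ k * Δ k)) := by
      rw [e0, hYkeq k]; noncomm_ring
    have e1' : G (y k) = Y * Y + (Y * Δ k + Δ k * Y + Δ k * Δ k) := by
      rw [e1]; simp
    rw [e1']
    rw [Matrix.add_mul, Matrix.trace_add, Matrix.add_mul, Matrix.add_mul, Matrix.trace_add,
      Matrix.trace_add]
    have f1 : (Y * Y * Λ).trace = 0 := by rw [hYY]; exact htr0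
    have f2 : (Y * Δ k * Λ).trace = 0 := by
      rw [Matrix.trace_mul_comm (Y * Δ k) Λ, ← Matrix.mul_assoc, hΛY]
      simp
    have f3 : (Δ k * Y * Λ).trace = 0 := by
      rw [Matrix.mul_assoc, hYΛ]
      simp
    rw [f1, f2, f3]
    ring
  -- key inequality at every index
  have hkey : ∀ k, fderiv ℝ (fderiv ℝ L) (z k) (d k) (d k) / 2
      + ((W k * W k) * Λ).trace < 0 := by
    intro k
    have l1 : L (y k) = f (y k) - (G (y k) * Λ).trace := rfl
    have l2 : L x = f x - (G x * Λ).trace := rfl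
    have e1 : f (y k) - f x = (L (y k) - L x) + ((Δ k * Δ k) * Λ).trace := by
      rw [l1, l2, htrk k, htr0]; ring
    have e2 : L (y k) - L x = fderiv ℝ (fderiv ℝ L) (z k) (h k) (h k) / 2 := by
      have e := hcceq k
      rw [hxh k] at e
      rw [e, hgrad0 (h k)]
      ring
    have e3 : fderiv ℝ (fderiv ℝ L) (z k) (h k) (h k)
        = (t k)^2 * fderiv ℝ (fderiv ℝ L) (z k) (d k) (d k) := by
      rw [hhd k]
      simp only [ContinuousLinearMap.map_smul, ContinuousLinearMap.smul_apply, smul_eq_mul]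
      ring
    have e4 : ((Δ k * Δ k) * Λ).trace = (t k)^2 * ((W k * W k) * Λ).trace := by
      rw [hΔW k]
      simp only [smul_mul_assoc, mul_smul_comm, Matrix.trace_smul, smul_eq_mul, smul_smul]
      ring
    have e5 := hyf k
    have htp : (0:ℝ) < (t k)^2 := pow_pos (htpos k) 2
    have ebig : (t k)^2 * (fderiv ℝ (fderiv ℝ L) (z k) (d k) (d k) / 2
        + ((W k * W k) * Λ).trace) < 0 := by
      have eq1 : (t k)^2 * (fderiv ℝ (fderiv ℝ L) (z k) (d k) (d k) / 2
          + ((W k * W k) * Λ).trace) = f (y k) - f x := by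
        rw [e1, e2, e3, e4]; ring
      rw [eq1]; linarith
    by_contra hcon
    push_neg at hcon
    have := mul_nonneg htp.le hcon
    linarith
  -- compactness extraction
  have hKcomp : IsCompact ((Set.univ.pi fun _ : Fin n => Set.Icc (-1:ℝ) 1) ×ˢ
      ((Set.univ.pi fun _ : Fin m => Set.univ.pi fun _ : Fin m => Set.Icc (-1:ℝ) 1) :
        Set (Matrix (Fin m) (Fin m) ℝ))) :=
    (isCompact_univ_pi fun _ => isCompact_Icc).prod
      (isCompact_univ_pi fun _ => isCompact_univ_pi fun _ => isCompact_Icc)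
  have habs_le : ∀ (a b : ℝ), a^2 ≤ b^2 → 0 ≤ b → |a| ≤ b := by
    intro a b hab hb
    have := Real.sqrt_le_sqrt hab
    rwa [Real.sqrt_sq_eq_abs, Real.sqrt_sq hb] at this
  have humem : ∀ k, (d k, W k) ∈ ((Set.univ.pi fun _ : Fin n => Set.Icc (-1:ℝ) 1) ×ˢ
      ((Set.univ.pi fun _ : Fin m => Set.univ.pi fun _ : Fin m => Set.Icc (-1:ℝ) 1) :
        Set (Matrix (Fin m) (Fin m) ℝ))) := by
    intro k
    constructor
    · refine Set.mem_univ_pi.2 fun i => Set.mem_Icc.2 (abs_le.1 ?_)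
      have h1 : (h k i)^2 ≤ (t k)^2 := by
        rw [ht2 k]
        have h2 : (h k i)^2 ≤ ∑ i', (h k i')^2 :=
          Finset.single_le_sum (f := fun i' => (h k i')^2) (fun _ _ => sq_nonneg _)
            (Finset.mem_univ i)
        have h3 : 0 ≤ ∑ i', ∑ j', (Δ k i' j')^2 :=
          Finset.sum_nonneg fun _ _ => Finset.sum_nonneg fun _ _ => sq_nonneg _
        linarith
      have einv : ((t k)⁻¹)^2 * (t k)^2 = 1 := by
        rw [inv_pow, inv_mul_cancel₀ (pow_ne_zero 2 (htpos k).ne')]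
      have h4 : (d k i)^2 ≤ 1 := by
        have e1 : d k i = (t k)⁻¹ * h k i := rfl
        rw [e1, mul_pow]
        calc ((t k)⁻¹)^2 * (h k i)^2 ≤ ((t k)⁻¹)^2 * (t k)^2 :=
              mul_le_mul_of_nonneg_left h1 (sq_nonneg _)
        _ = 1 := einv
      exact habs_le (d k i) 1 (by simpa using h4) one_pos.le
    · refine Set.mem_univ_pi.2 fun i => Set.mem_univ_pi.2 fun j => Set.mem_Icc.2 (abs_le.1 ?_)
      have h1 : (Δ k i j)^2 ≤ (t k)^2 := by
        rw [ht2 k]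
        have h2 : (Δ k i j)^2 ≤ ∑ j', (Δ k i j')^2 :=
          Finset.single_le_sum (f := fun j' => (Δ k i j')^2) (fun _ _ => sq_nonneg _)
            (Finset.mem_univ j)
        have h2' : (∑ j', (Δ k i j')^2) ≤ ∑ i', ∑ j', (Δ k i' j')^2 :=
          Finset.single_le_sum (f := fun i' => ∑ j', (Δ k i' j')^2)
            (fun _ _ => Finset.sum_nonneg fun _ _ => sq_nonneg _) (Finset.mem_univ i)
        have h3 : 0 ≤ ∑ i', (h k i')^2 := Finset.sum_nonneg fun _ _ => sq_nonneg _
        linarith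
      have einv : ((t k)⁻¹)^2 * (t k)^2 = 1 := by
        rw [inv_pow, inv_mul_cancel₀ (pow_ne_zero 2 (htpos k).ne')]
      have h4 : (W k i j)^2 ≤ 1 := by
        have e1 : W k i j = (t k)⁻¹ * Δ k i j := rfl
        rw [e1, mul_pow]
        calc ((t k)⁻¹)^2 * (Δ k i j)^2 ≤ ((t k)⁻¹)^2 * (t k)^2 :=
              mul_le_mul_of_nonneg_left h1 (sq_nonneg _)
        _ = 1 := einv
      exact habs_le (W k i j) 1 (by simpa using h4) one_pos.le
  obtain ⟨⟨d0, W0'⟩, hp0K, φ, hφmono, hφt⟩ := hKcomp.tendsto_subseq humem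
  set W0 : Matrix (Fin m) (Fin m) ℝ := Matrix.of W0' with hW0def
  have hdt : Tendsto (fun i => d (φ i)) atTop (𝓝 d0) :=
    (continuous_fst.tendsto (d0, W0')).comp hφt
  have hWt : Tendsto (fun i => W (φ i)) atTop (𝓝 W0) :=
    (continuous_snd.tendsto (d0, W0')).comp hφt
  -- symmetry of W0
  have hWsymk : ∀ k (i j : Fin m), W k j i = W k i j := by
    intro k i j
    have e1 := congrFun (congrFun (hΔsym k) i) j
    simp only [Matrix.transpose_apply] at e1
    show (t k)⁻¹ * Δ k j i = (t k)⁻¹ * Δ k i j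
    rw [e1]
  have hW0symm : W0.IsSymm := by
    show W0ᵀ = W0
    ext i j
    rw [Matrix.transpose_apply]
    have e1 := tendsto_entry' hWt i j
    have e2 := tendsto_entry' hWt j i
    have e3 : Tendsto (fun k => W (φ k) j i) atTop (𝓝 (W0 i j)) := by
      simp only [hWsymk]; exact e1
    exact tendsto_nhds_unique e2 e3
  -- the limit is not zero
  have hnorm1 : ∀ k, ∑ i, (d k i)^2 + ∑ i, ∑ j, (W k i j)^2 = 1 := by
    intro k
    have e1 : ∑ i, (d k i)^2 + ∑ i, ∑ j, (W k i j)^2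
        = ((t k)⁻¹)^2 * ((t k)^2) := by
      have f1 : ∀ i, (d k i)^2 = ((t k)⁻¹)^2 * (h k i)^2 := fun i => by
        show ((t k)⁻¹ * h k i)^2 = _
        ring
      have f2 : ∀ i j, (W k i j)^2 = ((t k)⁻¹)^2 * (Δ k i j)^2 := fun i j => by
        show ((t k)⁻¹ * Δ k i j)^2 = _
        ring
      simp only [f1, f2, ← Finset.mul_sum]
      rw [← mul_add, ← ht2 k]
    rw [e1, inv_pow, inv_mul_cancel₀ (pow_ne_zero 2 (htpos k).ne')]
  have hlim1 : ∑ i, (d0 i)^2 + ∑ i, ∑ j, (W0 i j)^2 = 1 := by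
    have hL1 : Tendsto (fun k => ∑ i, (d (φ k) i)^2 + ∑ i, ∑ j, (W (φ k) i j)^2) atTop
        (𝓝 (∑ i, (d0 i)^2 + ∑ i, ∑ j, (W0 i j)^2)) := by
      apply Tendsto.add
      · exact tendsto_finset_sum _ fun i _ => ((tendsto_pi_nhds.1 hdt i).pow 2)
      · exact tendsto_finset_sum _ fun i _ => tendsto_finset_sum _ fun j _ =>
          ((tendsto_entry' hWt i j).pow 2)
    have hR : Tendsto (fun k => ∑ i, (d (φ k) i)^2 + ∑ i, ∑ j, (W (φ k) i j)^2) atTop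
        (𝓝 1) := by
      simp only [hnorm1]
      exact tendsto_const_nhds
    exact tendsto_nhds_unique hL1 hR
  have hne : ¬(d0 = 0 ∧ W0 = 0) := by
    rintro ⟨h1, h2⟩
    rw [h1, h2] at hlim1
    simp at hlim1
  -- the constraint equation in the limit
  have hmvt : ∀ k (i j : Fin m), ∃ c ∈ Set.Ioo (0:ℝ) 1,
      G (y k) i j - G x i j = fderiv ℝ (fun y' => G y' i j) (x + c • h k) (h k) := by
    intro k i j
    obtain ⟨c, hc, he⟩ := mvt1' (fun y' => G y' i j) ((hG i j).differentiable two_ne_zero) x (h k)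
    rw [hxh k] at he
    exact ⟨c, hc, he⟩
  choose ζ hζIoo hζeq using hmvt
  have hconstr_ent : ∀ (i j : Fin m),
      fderiv ℝ (fun y' => G y' i j) x d0 = (Y * W0 + W0 * Y) i j := by
    intro i j
    have lim1 : Tendsto (fun k => (t (φ k))⁻¹ * (G (y (φ k)) i j - G x i j)) atTop
        (𝓝 (fderiv ℝ (fun y' => G y' i j) x d0)) := by
      have ee : ∀ k, (t k)⁻¹ * (G (y k) i j - G x i j)
          = fderiv ℝ (fun y' => G y' i j) (x + ζ k i j • h k) (d k) := by
        intro k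
        rw [hζeq k i j]
        set DD := fderiv ℝ (fun y' => G y' i j) (x + ζ k i j • h k) with hDDdef
        rw [hhd k, DD.map_smul, smul_eq_mul, ← mul_assoc,
          inv_mul_cancel₀ (htpos k).ne', one_mul]
      simp only [ee]
      have hpt : Tendsto (fun k => x + ζ (φ k) i j • h (φ k)) atTop (𝓝 x) :=
        seg_tendsto' (fun k => hζIoo (φ k) i j) (hh0.comp hφmono.tendsto_atTop) x
      have hDcont : Continuous fun y' => fderiv ℝ (fun y'' => G y'' i j) y' :=
        (hG i j).continuous_fderiv (by norm_num)
      have hDt : Tendsto (fun k => fderiv ℝ (fun y'' => G y'' i j) (x + ζ (φ k) i j • h (φ k)))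
          atTop (𝓝 (fderiv ℝ (fun y'' => G y'' i j) x)) := (hDcont.tendsto x).comp hpt
      have happ : Continuous fun p : ((Fin n → ℝ) →L[ℝ] ℝ) × (Fin n → ℝ) => p.1 p.2 :=
        isBoundedBilinearMap_apply.continuous
      exact (happ.tendsto (fderiv ℝ (fun y'' => G y'' i j) x, d0)).comp (hDt.prodMk_nhds hdt)
    have lim2 : Tendsto (fun k => (t (φ k))⁻¹ * (G (y (φ k)) i j - G x i j)) atTop
        (𝓝 ((Y * W0 + W0 * Y) i j)) := by
      have idk : ∀ k, (t k)⁻¹ * (G (y k) i j - G x i j)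
          = (Y * W k + W k * Y) i j + t k * (W k * W k) i j := by
        intro k
        have e1 : G (y k) - G x = Y * Δ k + Δ k * Y + Δ k * Δ k := by
          have e0 : G (y k) = Yk k * Yk k := ((hyS k).sqrt_mul_self).symm
          rw [e0, hYkeq k, ← hYY]; noncomm_ring
        have e2 : G (y k) i j - G x i j = (Y * Δ k + Δ k * Y + Δ k * Δ k) i j := by
          rw [← e1]; simp [Matrix.sub_apply]
        rw [e2, hΔW k]
        have htne : t k ≠ 0 := (htpos k).ne'
        simp only [mul_smul_comm, smul_mul_assoc, smul_smul, Matrix.add_apply,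
          Matrix.smul_apply, smul_eq_mul]
        field_simp
      simp only [idk]
      have lA : Tendsto (fun k => (Y * W (φ k) + W (φ k) * Y) i j) atTop
          (𝓝 ((Y * W0 + W0 * Y) i j)) := by
        simp only [Matrix.add_apply, Matrix.mul_apply]
        apply Tendsto.add
        · exact tendsto_finset_sum _ fun l _ =>
            tendsto_const_nhds.mul (tendsto_entry' hWt l j)
        · exact tendsto_finset_sum _ fun l _ =>
            (tendsto_entry' hWt i l).mul tendsto_const_nhds
      have lB : Tendsto (fun k => t (φ k) * (W (φ k) * W (φ k)) i j) atTop (𝓝 0) := by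
        have l1 : Tendsto (fun k => (W (φ k) * W (φ k)) i j) atTop (𝓝 ((W0 * W0) i j)) := by
          simp only [Matrix.mul_apply]
          exact tendsto_finset_sum _ fun l _ =>
            (tendsto_entry' hWt i l).mul (tendsto_entry' hWt l j)
        have l2 := (ht0.comp hφmono.tendsto_atTop).mul l1
        rw [zero_mul] at l2
        exact l2
      have l3 := lA.add lB
      rw [add_zero] at l3
      exact l3
    exact tendsto_nhds_unique lim1 lim2
  have hdir : ∀ (v : Fin n → ℝ) (i j : Fin m),
      dirDerivG G x v i j = fderiv ℝ (fun y' => G y' i j) x v := by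
    intro v i j
    have hv : v = ∑ kk, v kk • (Pi.single kk (1:ℝ) : Fin n → ℝ) := by
      funext jj
      simp [Pi.single_apply, Finset.sum_apply]
    have e1 : dirDerivG G x v i j
        = ∑ kk, v kk * fderiv ℝ (fun y' => G y' i j) x (Pi.single kk 1) := by
      simp [dirDerivG, pderivG, Matrix.sum_apply, Matrix.smul_apply, smul_eq_mul,
        Matrix.of_apply]
    rw [e1]
    conv_rhs => rw [hv]
    rw [map_sum]
    exact (Finset.sum_congr rfl fun kk _ =>
      (fderiv ℝ (fun y' => G y' i j) x).map_smul _ _).symm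
  have hconstr : dirDerivG G x d0 = (2:ℝ) • jmul Y W0 := by
    ext i j
    rw [hdir d0 i j, hconstr_ent i j]
    show (Y * W0 + W0 * Y) i j = ((2:ℝ) • ((1 / 2 : ℝ) • (Y * W0 + W0 * Y))) i j
    rw [smul_smul]
    norm_num
  -- limit of the key inequality
  have hkey2 : fderiv ℝ (fderiv ℝ L) x d0 d0 / 2 + ((W0 * W0) * Λ).trace ≤ 0 := by
    have hzt : Tendsto (fun k => z (φ k)) atTop (𝓝 x) :=
      seg_tendsto' (fun k => hccIoo (φ k)) (hh0.comp hφmono.tendsto_atTop) x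
    have hBcont : Continuous fun y' => fderiv ℝ (fderiv ℝ L) y' :=
      (hLC2.fderiv_right (by norm_num)).continuous_fderiv one_ne_zero
    have happ1 : Continuous fun p : ((Fin n → ℝ) →L[ℝ] ((Fin n → ℝ) →L[ℝ] ℝ)) × (Fin n → ℝ)
        => p.1 p.2 := isBoundedBilinearMap_apply.continuous
    have happ2 : Continuous fun p : ((Fin n → ℝ) →L[ℝ] ℝ) × (Fin n → ℝ) => p.1 p.2 :=
      isBoundedBilinearMap_apply.continuous
    have s1 : Tendsto (fun k => fderiv ℝ (fderiv ℝ L) (z (φ k))) atTop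
        (𝓝 (fderiv ℝ (fderiv ℝ L) x)) := (hBcont.tendsto x).comp hzt
    have s2 : Tendsto (fun k => fderiv ℝ (fderiv ℝ L) (z (φ k)) (d (φ k))) atTop
        (𝓝 (fderiv ℝ (fderiv ℝ L) x d0)) :=
      (happ1.tendsto _).comp (s1.prodMk_nhds hdt)
    have s3 : Tendsto (fun k => fderiv ℝ (fderiv ℝ L) (z (φ k)) (d (φ k)) (d (φ k))) atTop
        (𝓝 (fderiv ℝ (fderiv ℝ L) x d0 d0)) :=
      (happ2.tendsto _).comp (s2.prodMk_nhds hdt)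
    have s4 : Tendsto (fun k => ((W (φ k) * W (φ k)) * Λ).trace) atTop
        (𝓝 (((W0 * W0) * Λ).trace)) := by
      have e : ∀ (V : Matrix (Fin m) (Fin m) ℝ), ((V * V) * Λ).trace
          = ∑ i, ∑ j, (∑ l, V i l * V l j) * Λ j i := by
        intro V
        simp [Matrix.trace, Matrix.diag, Matrix.mul_apply]
      simp only [e]
      exact tendsto_finset_sum _ fun i _ => tendsto_finset_sum _ fun j _ =>
        ((tendsto_finset_sum _ fun l _ =>
          (tendsto_entry' hWt i l).mul (tendsto_entry' hWt l j)).mul tendsto_const_nhds)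
    have s5 := (s3.div_const 2).add s4
    exact le_of_tendsto s5 (Filter.Eventually.of_forall fun k => (hkey (φ k)).le)
  -- contradiction with SOSC
  have hsp := hsosc d0 W0 hW0symm hne hconstr
  have hq1 : hessQ f G Λ x d0 = fderiv ℝ (fderiv ℝ L) x d0 d0 := by
    show iteratedFDeriv ℝ 2 L x ![d0, d0] = _
    rw [iteratedFDeriv_two_apply]
    simp
  have hq2 : minner (jmul W0 W0) Λ = ((W0 * W0) * Λ).trace := by
    have e1 : jmul W0 W0 = W0 * W0 := by
      show (1 / 2 : ℝ) • (W0 * W0 + W0 * W0) = W0 * W0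
      rw [← two_smul ℝ (W0 * W0), smul_smul]
      norm_num
    rw [e1]
    rfl
  rw [hq1, hq2] at hsp
  linarith
end
end

section
/- Let f : ℝⁿ → ℝ and G : ℝⁿ → S^m be twice continuously differentiable. Suppose (x,Λ) ∈ ℝⁿ × S^m is a KKT pair of (P1) satisfying strict complementarity (rank G(x) + rank Λ = m), nondegeneracy, and the SONC-SDP inequality: ⟨(∇²ₓL(x,Λ) + H(x,Λ))d, d⟩ ≥ 0 for all d in the critical cone C(x). Then there exists Y ∈ S^m (one may take Y = √G(x)) such that (x,Y,Λ) is a KKT triple of (P2) satisfying LICQ and SONC-NLP. -/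
open Matrix

noncomputable section

lemma tr_sq_zero {m : ℕ} {A : Matrix (Fin m) (Fin m) ℝ} (h : trace (A * Aᵀ) = 0) : A = 0 := by
  have h2 : ∑ i, ∑ j, (A i j)^2 = 0 := by
    rw [← h]; simp [trace, mul_apply, diag, sq]
  ext i j
  have h3 := (Finset.sum_eq_zero_iff_of_nonneg (fun i _ => Finset.sum_nonneg
    (fun j _ => sq_nonneg (A i j)))).mp h2 i (Finset.mem_univ i)
  have h4 := (Finset.sum_eq_zero_iff_of_nonneg (fun j _ => sq_nonneg (A i j))).mp h3 j
    (Finset.mem_univ j)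
  simpa using sq_eq_zero_iff.mp h4

open scoped MatrixOrder in
lemma psd_sqrt_exists {m : ℕ} {A : Matrix (Fin m) (Fin m) ℝ} (hA : A.PosSemidef) :
    ∃ S : Matrix (Fin m) (Fin m) ℝ, S.PosSemidef ∧ S * S = A ∧ Sᵀ = S :=
  ⟨CFC.sqrt A, (CFC.sqrt_nonneg A).posSemidef, CFC.sqrt_mul_sqrt_self A hA.nonneg,
    (CFC.sqrt_nonneg A).posSemidef.1⟩

lemma psd_trace_nonneg {m : ℕ} {A : Matrix (Fin m) (Fin m) ℝ} (hA : A.PosSemidef) : 0 ≤ trace A := by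
  apply Finset.sum_nonneg
  intro i _
  have := hA.dotProduct_mulVec_nonneg (Pi.single i 1)
  simpa [dotProduct, mulVec, Pi.single_apply, star_trivial] using this

lemma trace_mul_psd_nonneg {m : ℕ} {A B : Matrix (Fin m) (Fin m) ℝ} (hA : A.PosSemidef)
    (hB : B.PosSemidef) : 0 ≤ trace (A * B) := by
  obtain ⟨S, hSpsd, hSS, hSH⟩ := psd_sqrt_exists hA
  have : trace (A * B) = trace (S * B * Sᴴ) := by
    show _ = trace (S * B * Sᵀ)
    rw [hSH, ← hSS, mul_assoc, trace_mul_comm]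
  rw [this]
  exact psd_trace_nonneg (hB.mul_mul_conjTranspose_same S)

lemma anti_psd {m : ℕ} {Y W : Matrix (Fin m) (Fin m) ℝ} (hY : Y.PosSemidef) (hW : Wᵀ = W)
    (h : Y * W + W * Y = 0) : Y * W = 0 := by
  have hWY : W * Y = -(Y * W) := by
    have := congrArg (fun M => M - Y * W) h
    simpa [add_sub_cancel_left] using this
  have ht : trace (Y * W * W) = 0 := by
    have h1 : trace (Y * W * W) = trace (W * Y * W) := trace_mul_cycle Y W W
    rw [hWY, neg_mul, trace_neg] at h1
    linarith
  obtain ⟨S, hSpsd, hSS, hSH⟩ := psd_sqrt_exists hY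
  have hSW : S * W = 0 := by
    apply tr_sq_zero
    have hT : (S * W)ᵀ = W * S := by rw [transpose_mul, hW, hSH]
    rw [hT]
    calc trace (S * W * (W * S)) = trace (S * (W * (W * S))) := by simp only [mul_assoc]
      _ = trace ((W * (W * S)) * S) := trace_mul_comm _ _
      _ = trace (W * W * (S * S)) := by simp only [mul_assoc]
      _ = trace (W * W * Y) := by rw [hSS]
      _ = trace (Y * W * W) := trace_mul_cycle W W Y
      _ = 0 := ht
  calc Y * W = S * (S * W) := by rw [← hSS]; simp only [mul_assoc]
    _ = 0 := by rw [hSW, mul_zero]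

lemma exists_pinv {m : ℕ} {A : Matrix (Fin m) (Fin m) ℝ} (hA : A.PosSemidef) :
    ∃ P : Matrix (Fin m) (Fin m) ℝ, Pᵀ = P ∧ A * P * A = A ∧ P * A * P = P ∧
      (A * P)ᵀ = A * P ∧ (P * A)ᵀ = P * A := by
  have h := hA.1
  set U := (h.eigenvectorUnitary : Matrix (Fin m) (Fin m) ℝ) with hU
  have hU2 : star U * U = 1 := mem_unitaryGroup_iff'.mp (h.eigenvectorUnitary).2
  set ev := h.eigenvalues with hev
  have spec : A = U * diagonal ev * star U := by
    have := h.spectral_theorem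
    simpa using this
  set P := U * diagonal (fun i => (ev i)⁻¹) * star U with hP
  have key : ∀ d e : Fin m → ℝ, (U * diagonal d * star U) * (U * diagonal e * star U)
      = U * diagonal (fun i => d i * e i) * star U := by
    intro d e
    have : (U * diagonal d * star U) * (U * diagonal e * star U)
        = U * (diagonal d * ((star U * U) * diagonal e)) * star U := by
      simp only [mul_assoc]
    rw [this, hU2, one_mul, diagonal_mul_diagonal]
  have htr : ∀ d : Fin m → ℝ, (U * diagonal d * star U)ᵀ = U * diagonal d * star U := by
    intro d
    have : (U * diagonal d * star U)ᴴ = U * diagonal d * star U := by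
      rw [conjTranspose_mul, conjTranspose_mul, star_eq_conjTranspose,
        conjTranspose_conjTranspose, diagonal_conjTranspose]
      have hd : star d = d := by ext i; simp
      rw [hd, ← mul_assoc]
    exact this
  have hinv : ∀ g : ℝ → ℝ, (fun i => ev i * g (ev i)) = (fun i => ev i * g (ev i)) := fun _ => rfl
  refine ⟨P, htr _, ?_, ?_, ?_, ?_⟩
  · rw [spec, hP, key, key]
    congr 2
    ext i
    by_cases hz : ev i = 0 <;> field_simp [hz]
  · rw [spec, hP, key, key]
    congr 2
    ext i
    by_cases hz : ev i = 0 <;> field_simp [hz]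
  · rw [spec, hP, key]; exact htr _
  · rw [spec, hP, key]; exact htr _

lemma adj_dot {n m : ℕ} (G : (Fin n → ℝ) → Matrix (Fin m) (Fin m) ℝ)
    (x : Fin n → ℝ) (W : Matrix (Fin m) (Fin m) ℝ) (v : Fin n → ℝ) :
    (adjDG G x W) ⬝ᵥ v = trace (dirDerivG G x v * W) := by
  unfold adjDG dirDerivG minner
  rw [Finset.sum_mul, trace_sum]
  simp [smul_mul_assoc, trace_smul, dotProduct, mul_comm]

lemma quad_eq {n m : ℕ} (G : (Fin n → ℝ) → Matrix (Fin m) (Fin m) ℝ)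
    (x : Fin n → ℝ) (Λ P : Matrix (Fin m) (Fin m) ℝ) (v : Fin n → ℝ) :
    v ⬝ᵥ (Hmat G x Λ P *ᵥ v) =
      2 * trace (dirDerivG G x v * P * dirDerivG G x v * Λ) := by
  unfold Hmat dirDerivG
  have expand : (∑ i, v i • pderivG G x i) * P * (∑ j, v j • pderivG G x j) * Λ
      = ∑ i, ∑ j, (v i * v j) • (pderivG G x i * P * pderivG G x j * Λ) := by
    simp only [Finset.sum_mul, Finset.mul_sum, smul_mul_assoc, mul_smul_comm,
      Finset.smul_sum, smul_smul]
    rw [Finset.sum_comm]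
    exact Finset.sum_congr rfl fun i _ => Finset.sum_congr rfl fun j _ => by rw [mul_comm (v j)]
  rw [expand, trace_sum]
  simp only [trace_sum, trace_smul, mulVec, dotProduct, Hmat, of_apply, Finset.mul_sum]
  apply Finset.sum_congr rfl
  intro i _
  apply Finset.sum_congr rfl
  intro j _
  simp only [smul_eq_mul]
  ring

lemma half_smul_double {m : ℕ} (M : Matrix (Fin m) (Fin m) ℝ) :
    (1 / 2 : ℝ) • (M + M) = M := by
  rw [← two_smul ℝ M, smul_smul]
  norm_num

set_option maxHeartbeats 1600000 in
theorem stmt18 {n m : ℕ} (f : (Fin n → ℝ) → ℝ) (G : (Fin n → ℝ) → Matrix (Fin m) (Fin m) ℝ)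
    (hf : ContDiff ℝ 2 f) (hG : ∀ i j, ContDiff ℝ 2 fun y => G y i j)
    (x : Fin n → ℝ) (Λ : Matrix (Fin m) (Fin m) ℝ)
    (hKKT : KKT1 f G x Λ) (hsc : (G x).rank + Λ.rank = m) (hnd : Nondeg G x)
    (hsonc : ∀ P : Matrix (Fin m) (Fin m) ℝ, IsMPInv (G x) P →
      ∀ d ∈ CritCone f G x,
        0 ≤ hessQ f G Λ x d + d ⬝ᵥ (Hmat G x Λ P *ᵥ d)) :
    ∃ Y : Matrix (Fin m) (Fin m) ℝ, Y.IsSymm ∧ KKT2 f G x Y Λ ∧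
      LICQ G x Y ∧ SONCNLP f G x Y Λ := by
  obtain ⟨hgrad, hΛpsd, hGpsd, hcomp⟩ := hKKT
  obtain ⟨Y, hYpsd, hYY, hYsymm⟩ := psd_sqrt_exists hGpsd
  have hΛsymm : Λᵀ = Λ := hΛpsd.1
  -- complementarity: Λ and G x annihilate each other
  have hc2 : Λ * G x + G x * Λ = 0 := by
    have h2 : ((1:ℝ)/2) • (Λ * G x + G x * Λ) = 0 := hcomp
    rcases smul_eq_zero.mp h2 with h | h
    · norm_num at h
    · exact h
  have hGΛ : G x * Λ = 0 := anti_psd hGpsd hΛsymm (by rw [add_comm]; exact hc2)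
  have hΛG : Λ * G x = 0 := by
    have := hc2; rw [hGΛ, add_zero] at this; exact this
  have hΛY : Λ * Y = 0 := by
    apply tr_sq_zero
    have hT : (Λ * Y)ᵀ = Y * Λ := by rw [transpose_mul, hYsymm, hΛsymm]
    rw [hT]
    have h1 : Λ * Y * (Y * Λ) = Λ * G x * Λ := by
      rw [← hYY]; simp only [mul_assoc]
    rw [h1, hΛG, zero_mul, trace_zero]
  have hYΛ : Y * Λ = 0 := by
    have := congrArg Matrix.transpose hΛY
    rwa [transpose_mul, hYsymm, hΛsymm, transpose_zero] at this
  refine ⟨Y, hYsymm, ⟨hgrad, ?_, ?_⟩, ?_, ?_⟩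
  · -- jmul Λ Y = 0
    show (1 / 2 : ℝ) • (Λ * Y + Y * Λ) = 0
    rw [hΛY, hYΛ, add_zero, smul_zero]
  · -- G x = jmul Y Y
    show G x = (1 / 2 : ℝ) • (Y * Y + Y * Y)
    rw [half_smul_double, hYY]
  · -- LICQ
    intro W hWsymm hjm hadj
    have hanti : Y * W + W * Y = 0 := by
      have h2 : ((1:ℝ)/2) • (Y * W + W * Y) = 0 := hjm
      rcases smul_eq_zero.mp h2 with h | h
      · norm_num at h
      · exact h
    have hYW : Y * W = 0 := anti_psd hYpsd hWsymm hanti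
    have hGW : G x * W = 0 := by rw [← hYY, mul_assoc, hYW, mul_zero]
    exact hnd W hWsymm hGW hadj
  · -- SONCNLP
    intro v W hWsymm hdir
    obtain ⟨P, hPt, hGPG, hPGP, hGPs, hPGs⟩ := exists_pinv hGpsd
    have hdirA : dirDerivG G x v = Y * W + W * Y := by
      rw [hdir]
      show (2:ℝ) • ((1 / 2 : ℝ) • (Y * W + W * Y)) = _
      rw [smul_smul]; norm_num
    -- v is in the critical cone
    have hcrit : v ∈ CritCone f G x := by
      constructor
      · intro u hu
        have hYu : Y *ᵥ u = 0 := by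
          have h0 : u ⬝ᵥ ((G x) *ᵥ u) = 0 := by rw [hu, dotProduct_zero]
          have huY : u ᵥ* Y = Y *ᵥ u := by
            conv_lhs => rw [← hYsymm]
            exact vecMul_transpose Y u
          have h1 : u ⬝ᵥ ((G x) *ᵥ u) = (Y *ᵥ u) ⬝ᵥ (Y *ᵥ u) := by
            rw [← hYY, ← mulVec_mulVec, dotProduct_mulVec, huY]
          rw [h1] at h0
          exact dotProduct_self_eq_zero.mp h0
        have huY : u ᵥ* Y = Y *ᵥ u := by
          conv_lhs => rw [← hYsymm]
          exact vecMul_transpose Y u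
        rw [hdirA, add_mulVec, dotProduct_add, ← mulVec_mulVec, ← mulVec_mulVec,
          hYu, mulVec_zero, dotProduct_zero, dotProduct_mulVec, huY, hYu,
          zero_dotProduct, add_zero]
      · rw [hgrad, adj_dot, hdirA, add_mul, trace_add]
        have e1 : trace (Y * W * Λ) = 0 := by
          rw [mul_assoc, trace_mul_comm, mul_assoc, hΛY, mul_zero, trace_zero]
        have e2 : trace (W * Y * Λ) = 0 := by
          rw [mul_assoc, hYΛ, mul_zero, trace_zero]
        rw [e1, e2, add_zero]
    have hmain := hsonc P ⟨hGPG, hPGP, hGPs, hPGs⟩ v hcrit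
    rw [quad_eq, hdirA] at hmain
    -- reduce the trace term
    set A := Y * W + W * Y with hA
    set Q := Y * P * Y with hQ
    have hQt : Qᵀ = Q := by
      rw [hQ, transpose_mul, transpose_mul, hPt, hYsymm, ← mul_assoc]
    have hQQ : Q * Q = Q := by
      have h1 : Q * Q = Y * (P * (G x) * P) * Y := by
        rw [hQ, ← hYY]; simp only [mul_assoc]
      rw [h1, hPGP]
    have hRpsd : PosSemidef (1 - Q) := by
      have hRt : (1 - Q)ᵀ = 1 - Q := by rw [transpose_sub, transpose_one, hQt]
      have hRR : (1 - Q) * (1 - Q) = 1 - Q := by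
        rw [mul_sub, mul_one, sub_mul, one_mul, hQQ]; abel
      have h2 : (1 - Q)ᴴ * (1 - Q) = 1 - Q := by
        show (1 - Q)ᵀ * (1 - Q) = 1 - Q
        rw [hRt, hRR]
      rw [← h2]
      exact posSemidef_conjTranspose_mul_self _
    have hMpsd : PosSemidef (W * Λ * W) := by
      have := hΛpsd.mul_mul_conjTranspose_same W
      rwa [show Wᴴ = W from hWsymm] at this
    -- trace (A*P*A*Λ) = trace (W*Q*W*Λ)
    have htr : trace (A * P * A * Λ) = trace (W * Q * W * Λ) := by
      have hexp : A * P * A * Λ =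
          Y * W * P * (Y * W) * Λ + Y * W * P * (W * Y) * Λ +
          (W * Y * P * (Y * W) * Λ + W * Y * P * (W * Y) * Λ) := by
        rw [hA]; simp only [add_mul, mul_add]; abel
      rw [hexp, trace_add, trace_add, trace_add]
      have t1 : trace (Y * W * P * (Y * W) * Λ) = 0 := by
        have : Y * W * P * (Y * W) * Λ = Y * (W * P * (Y * (W * Λ))) := by
          simp only [mul_assoc]
        rw [this, trace_mul_comm]
        have : W * P * (Y * (W * Λ)) * Y = W * (P * (Y * (W * (Λ * Y)))) := by
          simp only [mul_assoc]
        rw [this, hΛY]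
        simp
      have t2 : trace (Y * W * P * (W * Y) * Λ) = 0 := by
        have : Y * W * P * (W * Y) * Λ = Y * (W * (P * (W * (Y * Λ)))) := by
          simp only [mul_assoc]
        rw [this, hYΛ]
        simp
      have t4 : trace (W * Y * P * (W * Y) * Λ) = 0 := by
        have : W * Y * P * (W * Y) * Λ = W * (Y * (P * (W * (Y * Λ)))) := by
          simp only [mul_assoc]
        rw [this, hYΛ]
        simp
      have t3 : trace (W * Y * P * (Y * W) * Λ) = trace (W * Q * W * Λ) := by
        rw [hQ]; congr 1; simp only [mul_assoc]
      rw [t1, t2, t3, t4]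
      ring
    -- trace (W*Q*W*Λ) ≤ trace (W*W*Λ)
    have hineq : trace (W * Q * W * Λ) ≤ trace (W * W * Λ) := by
      have hdiff : trace (W * W * Λ) - trace (W * Q * W * Λ)
          = trace ((1 - Q) * (W * Λ * W)) := by
        have e1 : (1 - Q) * (W * Λ * W) = W * Λ * W - Q * (W * Λ * W) := by
          rw [sub_mul, one_mul]
        have e2 : trace (W * Λ * W) = trace (W * W * Λ) := trace_mul_cycle W Λ W
        have e3 : trace (Q * (W * Λ * W)) = trace (W * Q * W * Λ) := by
          rw [← mul_assoc Q (W * Λ) W, trace_mul_comm]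
          rw [show W * (Q * (W * Λ)) = W * Q * W * Λ from by simp only [mul_assoc]]
        rw [e1, trace_sub, e2, e3]
      have hge : 0 ≤ trace ((1 - Q) * (W * Λ * W)) := trace_mul_psd_nonneg hRpsd hMpsd
      linarith
    -- conclude
    have hm : minner (jmul W W) Λ = trace (W * W * Λ) := by
      show trace ((1 / 2 : ℝ) • (W * W + W * W) * Λ) = _
      rw [half_smul_double]
    rw [hm]
    linarith
end
end
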